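/- Let G = ℤ_{n₁} ⊕ ℤ_{n₂} ⊕ ... ⊕ ℤ_{n_k} with 1 < n₁ | n₂ | ... | n_k, and let G = MS be a complete splitting with 0 = m·g, m ∈ M ⊆ ℤ, g ∈ S. Then gcd(m, n_j) = 1 for all 1 ≤ j ≤ k−1, |M| = gcd(m, n_k), g = (0,...,0, y_k · n_k/gcd(m,n_k)) for some integer y_k with gcd(y_k, gcd(m,n_k)) = 1, M·g = ⟨g⟩, and M is a complete set of representatives modulo ord(g). -/

import Mathlib

private lemma aux_val_smul_inj {A : Type*} [AddGroup A] {x : A} {N : ℕ} [NeZero N]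
    (hx : addOrderOf x = N) {a b : ZMod N} (h : a.val • x = b.val • x) : a = b := by
  have h2 : ((N : ℤ)) ∣ (a.val : ℤ) - (b.val : ℤ) := by
    have : ((addOrderOf x : ℕ) : ℤ) ∣ (a.val : ℤ) - (b.val : ℤ) := by
      rw [addOrderOf_dvd_iff_zsmul_eq_zero, sub_zsmul, natCast_zsmul, natCast_zsmul, h, add_neg_cancel]
    rwa [hx] at this
  have h3 : ((a.val : ℤ) : ZMod N) = ((b.val : ℤ) : ZMod N) := by
    have := (ZMod.intCast_zmod_eq_zero_iff_dvd ((a.val : ℤ) - (b.val : ℤ)) N).mpr h2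
    rwa [Int.cast_sub, sub_eq_zero] at this
  have h4 : ((a.val : ℕ) : ZMod N) = ((b.val : ℕ) : ZMod N) := by exact_mod_cast h3
  rwa [ZMod.natCast_val, ZMod.natCast_val, ZMod.cast_id, ZMod.cast_id] at h4

private lemma aux_zmod_order (N c : ℕ) (hc : c ∣ N) (hN : N ≠ 0) :
    addOrderOf ((↑(N / c) : ZMod N)) = c := by
  rw [ZMod.addOrderOf_coe _ hN, Nat.gcd_eq_right (Nat.div_dvd_of_dvd hc),
    Nat.div_div_self hc hN]

private lemma aux_zmod_smul (N c : ℕ) (hc : c ∣ N) (m : ℤ) (hm : (c : ℤ) ∣ m) :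
    m • ((↑(N / c) : ZMod N)) = 0 := by
  obtain ⟨m', rfl⟩ := hm
  rw [mul_comm, mul_smul, natCast_zsmul, nsmul_eq_mul, ← Nat.cast_mul,
    Nat.mul_div_cancel' hc, ZMod.natCast_self, smul_zero]

theorem stmt_3 (k : ℕ) (n : Fin (k + 1) → ℕ)
    (h1 : 1 < n 0) (hdvd : ∀ i : Fin k, n i.castSucc ∣ n i.succ)
    (M : Finset ℤ) (S : Finset ((i : Fin (k + 1)) → ZMod (n i)))
    (hCS : ∀ x : (i : Fin (k + 1)) → ZMod (n i),
      ∃! p : ℤ × ((i : Fin (k + 1)) → ZMod (n i)),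
        p.1 ∈ M ∧ p.2 ∈ S ∧ p.1 • p.2 = x)
    (m : ℤ) (g : (i : Fin (k + 1)) → ZMod (n i))
    (hm : m ∈ M) (hg : g ∈ S) (h0 : m • g = 0) :
    (∀ j : Fin (k + 1), j ≠ Fin.last k → Int.gcd m (n j) = 1) ∧
    M.card = Int.gcd m (n (Fin.last k)) ∧
    (∃ y : ℤ, Int.gcd y (Int.gcd m (n (Fin.last k))) = 1 ∧
      (∀ i : Fin (k + 1), i ≠ Fin.last k → g i = 0) ∧
      g (Fin.last k) =
        ((y * ((n (Fin.last k) : ℤ) / (Int.gcd m (n (Fin.last k)) : ℤ)) : ℤ) :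
          ZMod (n (Fin.last k)))) ∧
    (Set.image (fun m' : ℤ => m' • g) ↑M = ↑(AddSubgroup.zmultiples g)) ∧
    (∀ r : ZMod (addOrderOf g), ∃! m' : ℤ, m' ∈ M ∧ (m' : ZMod (addOrderOf g)) = r) := by
  classical
  have hex : ∀ x : (i : Fin (k + 1)) → ZMod (n i),
      ∃ p : ℤ × ((i : Fin (k + 1)) → ZMod (n i)), p.1 ∈ M ∧ p.2 ∈ S ∧ p.1 • p.2 = x :=
    fun x => (hCS x).exists
  have huniq : ∀ p q : ℤ × ((i : Fin (k + 1)) → ZMod (n i)),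
      p.1 ∈ M → p.2 ∈ S → q.1 ∈ M → q.2 ∈ S → p.1 • p.2 = q.1 • q.2 → p = q := by
    intro p q hp1 hp2 hq1 hq2 h
    obtain ⟨r, -, hr⟩ := hCS (q.1 • q.2)
    rw [hr p ⟨hp1, hp2, h⟩, hr q ⟨hq1, hq2, rfl⟩]
  have hGfin : Finite ((i : Fin (k + 1)) → ZMod (n i)) := by
    have hsub : (Set.univ : Set ((i : Fin (k + 1)) → ZMod (n i))) ⊆
        (fun p : ℤ × ((i : Fin (k + 1)) → ZMod (n i)) => p.1 • p.2) '' (↑M ×ˢ ↑S) := by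
      intro x _
      obtain ⟨p, hp1, hp2, hp3⟩ := hex x
      exact ⟨p, ⟨hp1, hp2⟩, hp3⟩
    have : (Set.univ : Set ((i : Fin (k + 1)) → ZMod (n i))).Finite :=
      ((M.finite_toSet.prod S.finite_toSet).image _).subset hsub
    exact Set.finite_univ_iff.mp this
  haveI := hGfin
  have hn0 : ∀ i, n i ≠ 0 := by
    intro i hni
    have hsurj : Function.Surjective (fun f : ((j : Fin (k + 1)) → ZMod (n j)) => f i) :=
      fun x => ⟨Pi.single i x, by simpa using Pi.single_eq_same i x⟩
    have hfin : Finite (ZMod (n i)) := Finite.of_surjective _ hsurj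
    rw [hni] at hfin
    exact (inferInstance : Infinite ℤ).not_finite hfin
  have hNZ : ∀ i, NeZero (n i) := fun i => ⟨hn0 i⟩
  have mono : ∀ i j : Fin (k + 1), i ≤ j → n i ∣ n j := by
    have H : ∀ b : ℕ, ∀ hb : b < k + 1, ∀ a : ℕ, ∀ ha : a < k + 1, a ≤ b →
        n ⟨a, ha⟩ ∣ n ⟨b, hb⟩ := by
      intro b
      induction b with
      | zero =>
        intro hb a ha hab
        have : a = 0 := Nat.le_zero.mp hab
        subst this
        exact dvd_rfl
      | succ b ih =>
        intro hb a ha hab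
        rcases Nat.lt_or_ge a (b + 1) with h' | h'
        · have hbk : b < k := by omega
          have step : n ⟨b, by omega⟩ ∣ n ⟨b + 1, hb⟩ := hdvd ⟨b, hbk⟩
          exact (ih (by omega) a ha (by omega)).trans step
        · have : a = b + 1 := le_antisymm hab h'
          subst this
          exact dvd_rfl
    intro i j hij
    exact H j.1 j.2 i.1 i.2 hij
  have hdl : ∀ i, n i ∣ n (Fin.last k) := fun i => mono i (Fin.last k) (Fin.le_last i)
  set N := n (Fin.last k) with hNdef
  set d := Int.gcd m N with hddef
  have hN0 : N ≠ 0 := hn0 _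
  have hd0 : d ≠ 0 := fun h => hN0 (Nat.cast_injective (Int.gcd_eq_zero_iff.mp h).2)
  have hdN : d ∣ N := Int.natCast_dvd_natCast.mp (Int.gcd_dvd_right _ _)
  have hdm : (d : ℤ) ∣ m := Int.gcd_dvd_left _ _
  have injm : ∀ m1 ∈ M, ∀ m2 ∈ M, m1 • g = m2 • g → m1 = m2 := by
    intro m1 h1' m2 h2' h
    exact congrArg Prod.fst (huniq (m1, g) (m2, g) h1' hg h2' hg h)
  have injs : ∀ s1 ∈ S, ∀ s2 ∈ S, m • s1 = m • s2 → s1 = s2 := fun s1 h1' s2 h2' h =>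
    congrArg Prod.snd (huniq (m, s1) (m, s2) hm h1' hm h2' h)
  have hcardG : Nat.card ((i : Fin (k + 1)) → ZMod (n i)) = M.card * S.card := by
    have hbij : Function.Bijective
        (fun p : ↥(M ×ˢ S) => (p : ℤ × ((i : Fin (k + 1)) → ZMod (n i))).1 •
          (p : ℤ × ((i : Fin (k + 1)) → ZMod (n i))).2) := by
      constructor
      · rintro ⟨p, hp⟩ ⟨q, hq⟩ h
        simp only [Finset.mem_product] at hp hq
        exact Subtype.ext (huniq p q hp.1 hp.2 hq.1 hq.2 h)
      · intro x
        obtain ⟨p, h1', h2', h3'⟩ := hex x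
        exact ⟨⟨p, Finset.mem_product.mpr ⟨h1', h2'⟩⟩, h3'⟩
    rw [← Nat.card_eq_of_bijective _ hbij, Nat.card_eq_finsetCard, Finset.card_product]
  set og := addOrderOf g with hogdef
  have hogm : (og : ℤ) ∣ m := addOrderOf_dvd_iff_zsmul_eq_zero.mpr h0
  have hogN : og ∣ N := by
    apply addOrderOf_dvd_of_nsmul_eq_zero
    funext i
    obtain ⟨c, hc⟩ := hdl i
    show N • g i = 0
    rw [nsmul_eq_mul, hc, Nat.cast_mul, ZMod.natCast_self, zero_mul, zero_mul]
  have hog0 : og ≠ 0 := fun h => hN0 (Nat.zero_dvd.mp (h ▸ hogN))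
  haveI : NeZero og := ⟨hog0⟩
  have hogd : og ∣ d := by
    have h1' : og ∣ m.natAbs := by
      have := Int.natAbs_dvd_natAbs.mpr hogm
      simpa using this
    exact Nat.dvd_gcd h1' (by simpa using hogN)
  have hcast_inj : ∀ m1 ∈ M, ∀ m2 ∈ M, ((m1 : ZMod og) = (m2 : ZMod og)) → m1 = m2 := by
    intro m1 h1' m2 h2' h
    apply injm m1 h1' m2 h2'
    have hdvd' : (og : ℤ) ∣ m1 - m2 := by
      rwa [← ZMod.intCast_zmod_eq_zero_iff_dvd, Int.cast_sub, sub_eq_zero]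
    have hz : (m1 - m2) • g = 0 := by
      obtain ⟨c, hc⟩ := hdvd'
      rw [hc, mul_comm, mul_smul, natCast_zsmul, addOrderOf_nsmul_eq_zero, smul_zero]
    rw [sub_zsmul] at hz
    rw [← sub_eq_zero]
    rw [← hz]
    abel
  have hMle : M.card ≤ og := by
    have := Finset.card_le_card_of_injOn (fun m' : ℤ => (m' : ZMod og))
      (fun a _ => Finset.mem_univ _)
      (fun a ha b hb h => hcast_inj a ha b hb h)
    simpa [Finset.card_univ, ZMod.card] using this
  set φ := zsmulAddGroupHom (α := (i : Fin (k + 1)) → ZMod (n i)) m with hφdef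
  set K := φ.ker with hKdef
  have hmemK : ∀ x, x ∈ K ↔ m • x = 0 := fun x => Iff.rfl
  have hKle : Nat.card K ≤ M.card := by
    have hSpos : 0 < S.card := Finset.card_pos.mpr ⟨g, hg⟩
    have h1' : S.card ≤ Nat.card φ.range := by
      have hi : Function.Injective
          (fun s : ↥S => (⟨m • (s : ((i : Fin (k + 1)) → ZMod (n i))), ⟨s, rfl⟩⟩ : ↥φ.range)) := by
        rintro ⟨s1, hs1⟩ ⟨s2, hs2⟩ h
        exact Subtype.ext (injs _ hs1 _ hs2 (congrArg Subtype.val h))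
      calc S.card = Nat.card ↥S := (Nat.card_eq_finsetCard S).symm
        _ ≤ Nat.card φ.range := Nat.card_le_card_of_injective _ hi
    have h2' : M.card * S.card = Nat.card φ.range * Nat.card K := by
      rw [← hcardG, AddSubgroup.card_eq_card_quotient_mul_card_addSubgroup K]
      congr 1
      exact Nat.card_congr (QuotientAddGroup.quotientKerEquivRange φ).toEquiv
    have h3' : S.card * Nat.card K ≤ S.card * M.card := by
      calc S.card * Nat.card K ≤ Nat.card φ.range * Nat.card K :=
            Nat.mul_le_mul_right _ h1'
        _ = M.card * S.card := h2'.symm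
        _ = S.card * M.card := mul_comm _ _
    exact Nat.le_of_mul_le_mul_left h3' hSpos
  -- the element u
  set u : (i : Fin (k + 1)) → ZMod (n i) :=
    Pi.single (Fin.last k) ((↑(N / d) : ZMod N)) with hudef
  have hsingle_ord : ∀ (j : Fin (k + 1)) (x : ZMod (n j)),
      addOrderOf (Pi.single j x : (i : Fin (k + 1)) → ZMod (n i)) = addOrderOf x := by
    intro j x
    exact addOrderOf_injective (AddMonoidHom.single (fun i => ZMod (n i)) j)
      (fun a b hab => Pi.single_injective j hab) x
  have hptZ : ∀ (z : ℤ) (f : (i : Fin (k + 1)) → ZMod (n i)) (i), (z • f) i = z • f i :=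
    fun _ _ _ => rfl
  have hsingle_smul : ∀ (j : Fin (k + 1)) (x : ZMod (n j)) (z : ℤ),
      z • (Pi.single j x : (i : Fin (k + 1)) → ZMod (n i)) = Pi.single j (z • x) := by
    intro j x z
    funext i
    rw [hptZ]
    rcases eq_or_ne i j with rfl | hij
    · rw [Pi.single_eq_same, Pi.single_eq_same]
    · rw [Pi.single_eq_of_ne hij, Pi.single_eq_of_ne hij, smul_zero]
  have huord : addOrderOf u = d := by
    rw [hudef, hsingle_ord, aux_zmod_order N d hdN hN0]
  have humem : u ∈ K := by
    rw [hmemK, hudef, hsingle_smul, aux_zmod_smul N d hdN m hdm]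
    simp
  have hdle : d ≤ Nat.card K := by
    have hle : AddSubgroup.zmultiples u ≤ K := AddSubgroup.zmultiples_le.mpr humem
    calc d = Nat.card (AddSubgroup.zmultiples u) := by rw [Nat.card_zmultiples, huord]
      _ ≤ Nat.card K := AddSubgroup.card_le_of_le hle
  have hogled : og ≤ d := Nat.le_of_dvd (Nat.pos_of_ne_zero hd0) hogd
  have hMd : M.card = d := le_antisymm (hMle.trans hogled) (hdle.trans hKle)
  have hogdeq : og = d := le_antisymm hogled ((hdle.trans hKle).trans hMle)
  have hKd : Nat.card K = d := le_antisymm (hKle.trans_eq hMd) hdle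
  -- gcd = 1 for j ≠ last
  have hgcd1 : ∀ j, j ≠ Fin.last k → Int.gcd m (n j) = 1 := by
    intro j hj
    set e := Int.gcd m (n j) with hedef
    have he0 : e ≠ 0 := fun h => hn0 j (Nat.cast_injective (Int.gcd_eq_zero_iff.mp h).2)
    haveI : NeZero e := ⟨he0⟩
    haveI : NeZero d := ⟨hd0⟩
    have heN : e ∣ n j := Int.natCast_dvd_natCast.mp (Int.gcd_dvd_right _ _)
    have hem : (e : ℤ) ∣ m := Int.gcd_dvd_left _ _
    set v : (i : Fin (k + 1)) → ZMod (n i) :=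
      Pi.single j ((↑(n j / e) : ZMod (n j))) with hvdef
    have hvK : v ∈ K := by
      rw [hmemK, hvdef, hsingle_smul, aux_zmod_smul (n j) e heN m hem]
      simp
    have hvj : v j = ((↑(n j / e) : ZMod (n j))) := by
      rw [hvdef]; exact Pi.single_eq_same _ _
    have huj : u j = 0 := by
      rw [hudef]; exact Pi.single_eq_of_ne hj _
    have hulast : u (Fin.last k) = ((↑(N / d) : ZMod N)) := by
      rw [hudef]; exact Pi.single_eq_same _ _
    have hvlast : v (Fin.last k) = 0 := by
      rw [hvdef]; exact Pi.single_eq_of_ne (fun h => hj h.symm) _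
    have hinj : Function.Injective (fun p : ZMod e × ZMod d =>
        (⟨p.1.val • v + p.2.val • u,
          K.add_mem (AddSubgroup.nsmul_mem K hvK _)
            (AddSubgroup.nsmul_mem K humem _)⟩ : ↥K)) := by
      rintro ⟨a1, b1⟩ ⟨a2, b2⟩ h
      have h' : a1.val • v + b1.val • u = a2.val • v + b2.val • u :=
        congrArg Subtype.val h
      have hj' : a1.val • v j = a2.val • v j := by
        have h2 : a1.val • v j + b1.val • u j = a2.val • v j + b2.val • u j := congrFun h' j
        rwa [huj, smul_zero, smul_zero, add_zero, add_zero] at h2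
      have hl' : b1.val • u (Fin.last k) = b2.val • u (Fin.last k) := by
        have h2 : a1.val • v (Fin.last k) + b1.val • u (Fin.last k)
            = a2.val • v (Fin.last k) + b2.val • u (Fin.last k) := congrFun h' (Fin.last k)
        rwa [hvlast, smul_zero, smul_zero, zero_add, zero_add] at h2
      have ha : a1 = a2 := by
        apply aux_val_smul_inj (x := v j) (N := e) _ hj'
        rw [hvj]; exact aux_zmod_order (n j) e heN (hn0 j)
      have hb : b1 = b2 := by
        apply aux_val_smul_inj (x := u (Fin.last k)) (N := d) _ hl'
        rw [hulast]; exact aux_zmod_order N d hdN hN0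
      rw [ha, hb]
    have hcard_le : e * d ≤ Nat.card K := by
      have := Nat.card_le_card_of_injective _ hinj
      rwa [Nat.card_prod, Nat.card_eq_fintype_card, Nat.card_eq_fintype_card,
        ZMod.card, ZMod.card] at this
    rw [hKd] at hcard_le
    have : e ≤ 1 := by
      have hdpos : 0 < d := Nat.pos_of_ne_zero hd0
      nlinarith
    omega
  -- components of g
  have hgzero : ∀ i, i ≠ Fin.last k → g i = 0 := by
    intro i hi
    have hmi : m • g i = 0 := by
      have := congrFun h0 i
      simpa using this
    have h1' : addOrderOf (g i) ∣ m.natAbs := by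
      have := Int.natAbs_dvd_natAbs.mpr (addOrderOf_dvd_iff_zsmul_eq_zero.mpr hmi)
      simpa using this
    have h2' : addOrderOf (g i) ∣ n i := by
      apply addOrderOf_dvd_of_nsmul_eq_zero
      rw [nsmul_eq_mul, ZMod.natCast_self, zero_mul]
    have h3' : addOrderOf (g i) ∣ Int.gcd m (n i) := Nat.dvd_gcd h1' (by simpa using h2')
    rw [hgcd1 i hi] at h3'
    exact AddMonoid.addOrderOf_eq_one_iff.mp (Nat.dvd_one.mp h3')
  have hgsingle : g = Pi.single (Fin.last k) (g (Fin.last k)) := by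
    funext i
    by_cases hi : i = Fin.last k
    · subst hi; rw [Pi.single_eq_same]
    · rw [Pi.single_eq_of_ne hi, hgzero i hi]
  have hglast_ord : addOrderOf (g (Fin.last k)) = d := by
    calc addOrderOf (g (Fin.last k))
        = addOrderOf (Pi.single (Fin.last k) (g (Fin.last k)) :
            (i : Fin (k + 1)) → ZMod (n i)) := (hsingle_ord _ _).symm
      _ = og := by rw [← hgsingle]
      _ = d := hogdeq
  -- construct y
  haveI : NeZero N := hNZ (Fin.last k)
  set c := (g (Fin.last k)).val with hcdef
  have hcgl : ((c : ℕ) : ZMod N) = g (Fin.last k) := ZMod.natCast_rightInverse _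
  have hcord : N / Nat.gcd N c = d := by
    have h' := ZMod.addOrderOf_coe c hN0
    rw [hcgl, hglast_ord] at h'
    exact h'.symm
  have hGcd : Nat.gcd N c = N / d := by
    have h1' : Nat.gcd N c ∣ N := Nat.gcd_dvd_left _ _
    have h2' := Nat.div_div_self h1' hN0
    rw [hcord] at h2'
    exact h2'.symm
  obtain ⟨y0, hy0⟩ : N / d ∣ c := hGcd ▸ Nat.gcd_dvd_right N c
  have hNd0 : N / d ≠ 0 := by
    have := Nat.div_mul_cancel hdN
    intro h
    rw [h, zero_mul] at this
    exact hN0 this.symm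
  have hy0d : Nat.gcd y0 d = 1 := by
    have ht1 : Nat.gcd y0 d ∣ y0 := Nat.gcd_dvd_left _ _
    have ht2 : Nat.gcd y0 d ∣ d := Nat.gcd_dvd_right _ _
    have ht : (N / d) * Nat.gcd y0 d ∣ Nat.gcd N c := by
      apply Nat.dvd_gcd
      · calc (N / d) * Nat.gcd y0 d ∣ (N / d) * d := mul_dvd_mul_left _ ht2
          _ = N := Nat.div_mul_cancel hdN
      · rw [hy0]
        exact mul_dvd_mul_left _ ht1
    rw [hGcd] at ht
    have h4 : (N / d) * Nat.gcd y0 d ∣ (N / d) * 1 := by rw [mul_one]; exact ht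
    exact Nat.dvd_one.mp ((Nat.mul_dvd_mul_iff_left (Nat.pos_of_ne_zero hNd0)).mp h4)
  refine ⟨hgcd1, hMd, ⟨(y0 : ℤ), ?_, hgzero, ?_⟩, ?_, ?_⟩
  · simpa [Int.gcd] using hy0d
  · have he1 : ((y0 : ℤ) * ((N : ℤ) / (d : ℤ))) = ((c : ℕ) : ℤ) := by
      rw [← Int.natCast_div, ← Nat.cast_mul]
      exact_mod_cast (Nat.mul_comm y0 (N / d)).trans hy0.symm
    rw [he1, Int.cast_natCast, hcgl]
  · have himsub : (fun m' : ℤ => m' • g) '' ↑M ⊆ ↑(AddSubgroup.zmultiples g) := by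
      rintro x ⟨m', _, rfl⟩
      exact AddSubgroup.mem_zmultiples_iff.mpr ⟨m', rfl⟩
    apply (Set.eq_of_subset_of_ncard_le himsub ?_ (Set.toFinite _))
    have h1' : ((AddSubgroup.zmultiples g : Set ((i : Fin (k + 1)) → ZMod (n i)))).ncard = og := by
      rw [← Nat.card_coe_set_eq]
      exact Nat.card_zmultiples g
    have h2' : ((fun m' : ℤ => m' • g) '' ↑M).ncard = M.card := by
      rw [Set.ncard_image_of_injOn, Set.ncard_coe_finset]
      intro a ha b hb hab
      exact injm a ha b hb hab
    rw [h1', h2', hMd, hogdeq]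
  · intro r
    have himg : Finset.image (fun m' : ℤ => (m' : ZMod og)) M = Finset.univ := by
      apply Finset.eq_univ_of_card
      rw [Finset.card_image_of_injOn (fun a ha b hb h => hcast_inj a ha b hb h),
        hMd, ZMod.card og, hogdeq]
    have hr : r ∈ Finset.image (fun m' : ℤ => (m' : ZMod og)) M := by
      rw [himg]; exact Finset.mem_univ r
    obtain ⟨m', hm', hcast⟩ := Finset.mem_image.mp hr
    exact ⟨m', ⟨hm', hcast⟩, fun m'' h'' => hcast_inj m'' h''.1 m' hm' (h''.2.trans hcast.symm)⟩
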